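/- (Happel-Ringel) Let Λ be a finite dimensional hereditary algebra and T_1, T_2 indecomposable Λ-modules with Ext^1_Λ(T_1, T_2) = 0. Then every nonzero homomorphism T_2 → T_1 is either a monomorphism or an epimorphism. -/

import Mathlib

/-- `Ext¹_Λ(A, B) = 0`, encoded as: every short exact sequence
`0 → B → E → A → 0` of `Λ`-modules splits. -/
def ExtOneVanish (Λ : Type) [Ring Λ] (A : Type) [AddCommGroup A] [Module Λ A]
    (B : Type) [AddCommGroup B] [Module Λ B] : Prop :=
  ∀ (E : Type) (_ : AddCommGroup E) (_ : Module Λ E)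
    (i : B →ₗ[Λ] E) (p : E →ₗ[Λ] A),
    Function.Injective i → Function.Surjective p →
    LinearMap.range i = LinearMap.ker p →
    ∃ s : A →ₗ[Λ] E, p.comp s = LinearMap.id

/-- A module is indecomposable: it is nonzero and admits no nontrivial direct sum
decomposition. -/
def IsIndecomposableModule (Λ : Type) [Ring Λ] (A : Type) [AddCommGroup A]
    [Module Λ A] : Prop :=
  Nontrivial A ∧ ∀ (N N' : Submodule Λ A), IsCompl N N' → N = ⊥ ∨ N' = ⊥

theorem hr_unit_or_nilpotent
    (K : Type) [Field K] (Λ : Type) [Ring Λ] [Algebra K Λ]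
    (T : Type) [AddCommGroup T] [Module Λ T] [Module K T] [IsScalarTower K Λ T]
    [FiniteDimensional K T]
    (hT : IsIndecomposableModule Λ T) (g : T →ₗ[Λ] T) :
    IsUnit g ∨ IsNilpotent g := by
  haveI : IsNoetherian Λ T := isNoetherian_of_tower K inferInstance
  haveI : IsArtinian Λ T := isArtinian_of_tower K inferInstance
  obtain ⟨N, hN⟩ := Filter.eventually_atTop.mp g.eventually_isCompl_ker_pow_range_pow
  have hcompl := hN (N + 1) (Nat.le_succ N)
  rcases hT.2 _ _ hcompl with hker | hrange
  · left
    rw [← isUnit_pow_iff (n := N + 1) (Nat.succ_ne_zero N)]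
    rw [Module.End.isUnit_iff]
    constructor
    · exact LinearMap.ker_eq_bot.mp hker
    · have := hcompl.sup_eq_top
      rw [hker, bot_sup_eq] at this
      exact LinearMap.range_eq_top.mp this
  · right
    exact ⟨N + 1, LinearMap.range_eq_bot.mp hrange⟩

theorem hr_unit_of_add
    (K : Type) [Field K] (Λ : Type) [Ring Λ] [Algebra K Λ]
    (T : Type) [AddCommGroup T] [Module Λ T] [Module K T] [IsScalarTower K Λ T]
    [FiniteDimensional K T]
    (hT : IsIndecomposableModule Λ T) (a b : T →ₗ[Λ] T)
    (hab : a + b = LinearMap.id) (ha : ¬ IsUnit a) : IsUnit b := by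
  rcases hr_unit_or_nilpotent K Λ T hT a with h | h
  · exact absurd h ha
  · have hb : b = 1 - a := by
      have h1 : a + b = 1 := hab
      rw [← h1]; exact (add_sub_cancel_left a b).symm
    rw [hb]
    exact h.isUnit_one_sub

theorem hr_lift (Λ : Type) [Ring Λ]
    (hhered : ∀ I : Submodule Λ Λ, Module.Projective Λ I) (n : ℕ) :
    ∀ (Z : Type) (_ : AddCommGroup Z) (_ : Module Λ Z)
      (ι : Z →ₗ[Λ] (Fin n → Λ)) (_ : Function.Injective ι)
      (X Y : Type) (_ : AddCommGroup X) (_ : Module Λ X)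
      (_ : AddCommGroup Y) (_ : Module Λ Y)
      (p : X →ₗ[Λ] Y) (_ : Function.Surjective p) (h : Z →ₗ[Λ] Y),
      ∃ g : Z →ₗ[Λ] X, p.comp g = h := by
  induction n with
  | zero =>
    intro Z _ _ ι hι X Y _ _ _ _ p hp h
    haveI : Subsingleton Z := ⟨fun a b => hι (Subsingleton.elim _ _)⟩
    refine ⟨0, ?_⟩
    ext z
    rw [Subsingleton.elim z 0]
    simp
  | succ n IH =>
    intro Z _ _ ι hι X Y _ _ _ _ p hp h
    set e : Z →ₗ[Λ] Λ := (LinearMap.proj (Fin.last n)).comp ι with he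
    haveI := hhered (LinearMap.range e)
    obtain ⟨s, hs⟩ := Module.projective_lifting_property e.rangeRestrict LinearMap.id
      (LinearMap.surjective_rangeRestrict e)
    have hse : ∀ a : LinearMap.range e, e (s a) = (a : Λ) := by
      intro a
      have := congrArg (fun t => ((t : (LinearMap.range e) →ₗ[Λ] (LinearMap.range e)) a : Λ))
        hs
      simpa using this
    set Z₀ := LinearMap.ker e with hZ₀
    set ι₀ : Z₀ →ₗ[Λ] (Fin n → Λ) :=
      (LinearMap.pi fun i => LinearMap.proj (Fin.castSucc i)).comp (ι.comp Z₀.subtype) with hι₀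
    have hι₀inj : Function.Injective ι₀ := by
      intro z w hzw
      have hmem : ∀ u : Z₀, ι (u : Z) (Fin.last n) = 0 := by
        intro u
        exact u.2
      apply Subtype.ext
      apply hι
      funext i
      refine Fin.lastCases ?_ ?_ i
      · rw [hmem z, hmem w]
      · intro j
        exact congrFun hzw j
    obtain ⟨g₀, hg₀⟩ := IH Z₀ _ _ ι₀ hι₀inj X Y _ _ _ _ p hp (h.comp Z₀.subtype)
    obtain ⟨g₁, hg₁⟩ := Module.projective_lifting_property p (h.comp s) hp
    have hmem0 : ∀ z : Z, z - s (e.rangeRestrict z) ∈ Z₀ := by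
      intro z
      simp only [hZ₀, LinearMap.mem_ker, map_sub]
      rw [hse]
      simp [LinearMap.rangeRestrict]
    set π₀ : Z →ₗ[Λ] Z₀ :=
      (LinearMap.id - s.comp e.rangeRestrict).codRestrict Z₀ hmem0 with hπ₀
    refine ⟨g₀.comp π₀ + g₁.comp e.rangeRestrict, ?_⟩
    ext z
    have h1 : p (g₀ (π₀ z)) = h ((π₀ z : Z)) := congrFun (congrArg (fun m => m.toFun) hg₀) (π₀ z)
    have h2 : p (g₁ (e.rangeRestrict z)) = h (s (e.rangeRestrict z)) :=
      congrFun (congrArg (fun m => m.toFun) hg₁) (e.rangeRestrict z)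
    have h3 : ((π₀ z : Z)) = z - s (e.rangeRestrict z) := rfl
    simp only [LinearMap.comp_apply, LinearMap.add_apply, map_add]
    rw [h1, h2, h3, map_sub]
    abel


set_option maxHeartbeats 1000000

/-- Happel–Ringel: Let `Λ` be a finite dimensional hereditary algebra over a
field `K` and `T₁`, `T₂` finite dimensional indecomposable `Λ`-modules with
`Ext¹_Λ(T₁, T₂) = 0`.  Then every nonzero homomorphism `T₂ → T₁` is either a monomorphism
or an epimorphism. -/
theorem happel_ringel
    (K : Type) [Field K] (Λ : Type) [Ring Λ] [Algebra K Λ] [FiniteDimensional K Λ]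
    -- Λ is hereditary: every (right) ideal is projective
    (hhered : ∀ I : Submodule Λ Λ, Module.Projective Λ I)
    (T₁ T₂ : Type) [AddCommGroup T₁] [Module Λ T₁] [AddCommGroup T₂] [Module Λ T₂]
    [Module K T₁] [IsScalarTower K Λ T₁] [FiniteDimensional K T₁]
    [Module K T₂] [IsScalarTower K Λ T₂] [FiniteDimensional K T₂]
    (h₁ : IsIndecomposableModule Λ T₁) (h₂ : IsIndecomposableModule Λ T₂)
    (hext : ExtOneVanish Λ T₁ T₂)
    (f : T₂ →ₗ[Λ] T₁) (hf : f ≠ 0) :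
    Function.Injective f ∨ Function.Surjective f := by
  by_contra hcon
  push_neg at hcon
  obtain ⟨hninj, hnsurj⟩ := hcon
  classical
  set I : Submodule Λ T₁ := LinearMap.range f with hI
  -- a surjection from a finite free module onto T₁
  haveI : Module.Finite Λ T₁ := Module.Finite.of_restrictScalars_finite K Λ T₁
  obtain ⟨n, π, hπ⟩ := Module.Finite.exists_fin' Λ T₁
  -- the submodule R = π⁻¹(I) and a lift g : R → T₂ of π|R through f
  set Rs : Submodule Λ (Fin n → Λ) := I.comap π with hRs
  have hmemR : ∀ r : Rs, π (r : Fin n → Λ) ∈ I := fun r => r.2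
  obtain ⟨g, hg⟩ := hr_lift Λ hhered n Rs _ _ Rs.subtype Subtype.coe_injective
    T₂ I _ _ _ _ f.rangeRestrict (LinearMap.surjective_rangeRestrict f)
    (LinearMap.codRestrict I (π.comp Rs.subtype) hmemR)
  have hg' : ∀ r : Rs, f (g r) = π (r : Fin n → Λ) := by
    intro r
    have := congrArg (fun t => ((t : Rs →ₗ[Λ] I) r : T₁)) hg
    exact this
  -- the pushout module Mq
  set D : Submodule Λ ((Fin n → Λ) × T₂) := LinearMap.range (Rs.subtype.prod (-g)) with hD
  set Mq := ((Fin n → Λ) × T₂) ⧸ D with hMq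
  set ψ : ((Fin n → Λ) × T₂) →ₗ[Λ] T₁ :=
    π.comp (LinearMap.fst Λ _ _) + f.comp (LinearMap.snd Λ _ _) with hψ
  have hDψ : D ≤ LinearMap.ker ψ := by
    rintro z ⟨r, rfl⟩
    simp [hψ, hg' r]
  set φ : Mq →ₗ[Λ] T₁ := D.liftQ ψ hDψ with hφ
  set j : T₂ →ₗ[Λ] Mq := D.mkQ.comp (LinearMap.inr Λ _ _) with hj
  have hφj : ∀ x, φ (j x) = f x := by
    intro x
    show φ (Submodule.Quotient.mk (0, x)) = f x
    rw [hφ, Submodule.liftQ_apply]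
    simp [hψ]
  have hφmk : ∀ w x, φ (D.mkQ (w, x)) = π w + f x := by
    intro w x
    show φ (Submodule.Quotient.mk (w, x)) = π w + f x
    rw [hφ, Submodule.liftQ_apply]
    simp [hψ]
  have hφsurj : Function.Surjective φ := by
    intro t
    obtain ⟨w, rfl⟩ := hπ t
    exact ⟨D.mkQ (w, 0), by simpa using hφmk w 0⟩
  have hjinj : Function.Injective j := by
    intro x y hxy
    have hmem : (((0 : Fin n → Λ), x) : (Fin n → Λ) × T₂) - ((0 : Fin n → Λ), y) ∈ D := by
      rw [← Submodule.Quotient.eq]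
      exact hxy
    obtain ⟨r, hr⟩ := hmem
    have hr1 : (r : Fin n → Λ) = (0 : Fin n → Λ) - 0 := congrArg Prod.fst hr
    have hr0 : r = 0 := Subtype.coe_injective (by simpa using hr1)
    have hr2 : -g r = x - y := congrArg Prod.snd hr
    rw [hr0] at hr2
    simp at hr2
    exact sub_eq_zero.mp hr2.symm
  -- the short exact sequence 0 → T₂ → I × Mq → T₁ → 0
  set α : T₂ →ₗ[Λ] (I × Mq) := f.rangeRestrict.prod (-j) with hα
  set β : (I × Mq) →ₗ[Λ] T₁ :=
    I.subtype.comp (LinearMap.fst Λ _ _) + φ.comp (LinearMap.snd Λ _ _) with hβ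
  have hβα : ∀ x, β (α x) = 0 := by
    intro x
    have : β (α x) = (f.rangeRestrict x : T₁) + φ (-(j x)) := rfl
    rw [this, map_neg, hφj]
    simp
  have hαinj : Function.Injective α := by
    intro x y hxy
    have := congrArg Prod.snd hxy
    simp only [hα, LinearMap.prod_apply, Function.prod, LinearMap.neg_apply, neg_inj] at this
    exact hjinj (neg_inj.mp this)
  have hβsurj : Function.Surjective β := by
    intro t
    obtain ⟨w, rfl⟩ := hπ t
    refine ⟨(0, D.mkQ (w, 0)), ?_⟩
    have h11 : β ((0 : I), D.mkQ (w, 0)) = (0 : T₁) + φ (D.mkQ (w, 0)) := rfl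
    rw [h11, hφmk]
    simp
  have hexact : LinearMap.range α = LinearMap.ker β := by
    apply le_antisymm
    · rintro z ⟨x, rfl⟩
      exact hβα x
    · rintro ⟨a, m⟩ hm
      obtain ⟨⟨w, x⟩, rfl⟩ := D.mkQ_surjective m
      have hm' : (a : T₁) + (π w + f x) = 0 := by
        have hm2 : (a : T₁) + φ (D.mkQ (w, x)) = 0 := hm
        rw [hφmk] at hm2
        exact hm2
      have hπw : π w ∈ I := by
        have h9 : π w + f x = -(a : T₁) := eq_neg_of_add_eq_zero_right hm'
        have : π w = -(a : T₁) - f x := eq_sub_of_add_eq h9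
        rw [this]
        exact sub_mem (neg_mem a.2) (LinearMap.mem_range_self f x)
      set r : Rs := ⟨w, hπw⟩ with hrdef
      refine ⟨-(x + g r), ?_⟩
      have hfst : f.rangeRestrict (-(x + g r)) = a := by
        apply Subtype.ext
        have h10 : -(π w + f x) = (a : T₁) := neg_eq_of_add_eq_zero_left hm'
        have : f (-(x + g r)) = (a : T₁) := by
          rw [map_neg, map_add, hg' r]
          rw [← h10]
          have hrw2 : (r : Fin n → Λ) = w := rfl
          rw [hrw2, add_comm (f x) (π w)]
        simpa using this
      have hsnd : -(j (-(x + g r))) = D.mkQ (w, x) := by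
        rw [map_neg, neg_neg]
        show Submodule.Quotient.mk (((0 : Fin n → Λ), x + g r) : (Fin n → Λ) × T₂)
          = Submodule.Quotient.mk ((w, x) : (Fin n → Λ) × T₂)
        rw [Submodule.Quotient.eq]
        refine ⟨-r, ?_⟩
        have : Rs.subtype.prod (-g) (-r) = (-(r : Fin n → Λ), g r) := by
          simp [Prod.ext_iff]
        rw [this]
        show (-(r : Fin n → Λ), g r)
          = (((0 : Fin n → Λ), x + g r) : (Fin n → Λ) × T₂) - (w, x)
        have hrw : (r : Fin n → Λ) = w := rfl
        rw [Prod.mk_sub_mk]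
        rw [hrw]
        simp
      show α (-(x + g r)) = (a, D.mkQ (w, x))
      rw [hα]
      exact Prod.ext hfst hsnd
  -- split the sequence
  obtain ⟨s, hs⟩ := hext (I × Mq) inferInstance inferInstance α β hαinj hβsurj hexact
  set s₁ : T₁ →ₗ[Λ] I := (LinearMap.fst Λ _ _).comp s with hs₁
  set s₂ : T₁ →ₗ[Λ] Mq := (LinearMap.snd Λ _ _).comp s with hs₂
  have hβs : ∀ t, ((s₁ t : T₁)) + φ (s₂ t) = t := by
    intro t
    have := congrArg (fun m => (m : T₁ →ₗ[Λ] T₁) t) hs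
    simpa [hβ, hs₁, hs₂] using this
  have hadd1 : I.subtype.comp s₁ + φ.comp s₂ = LinearMap.id := by
    ext t; simpa using hβs t
  have hInetop : I ≠ ⊤ := fun h => hnsurj (LinearMap.range_eq_top.mp h)
  have hnotunit1 : ¬ IsUnit (I.subtype.comp s₁) := by
    intro hu
    apply hInetop
    rw [eq_top_iff]
    intro t _
    obtain ⟨t', ht'⟩ := (Module.End.isUnit_iff _).mp hu |>.2 t
    have : (s₁ t' : T₁) ∈ I := (s₁ t').2
    rw [← ht']
    exact this
  have hunitφs₂ : IsUnit (φ.comp s₂) := hr_unit_of_add K Λ T₁ h₁ _ _ hadd1 hnotunit1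
  obtain ⟨u, hu⟩ := hunitφs₂
  set σ : T₁ →ₗ[Λ] Mq := s₂.comp (↑u⁻¹ : T₁ →ₗ[Λ] T₁) with hσ
  have hφσ : ∀ t, φ (σ t) = t := by
    intro t
    have h5 : φ.comp σ = LinearMap.id := by
      rw [hσ, ← LinearMap.comp_assoc, ← hu]
      calc (↑u : T₁ →ₗ[Λ] T₁).comp (↑u⁻¹ : T₁ →ₗ[Λ] T₁) = (↑u * ↑u⁻¹ : T₁ →ₗ[Λ] T₁) := rfl
        _ = (1 : T₁ →ₗ[Λ] T₁) := by rw [u.mul_inv]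
        _ = LinearMap.id := rfl
    exact congrArg (fun m => (m : T₁ →ₗ[Λ] T₁) t) h5
  -- retraction r of α
  have hker : ∀ z : I × Mq, z - s (β z) ∈ LinearMap.range α := by
    intro z
    rw [hexact]
    have : β (s (β z)) = β z := congrArg (fun m => (m : T₁ →ₗ[Λ] T₁) (β z)) hs
    simp [LinearMap.mem_ker, this]
  set eqv := LinearEquiv.ofInjective α hαinj with heqv
  set rr : (I × Mq) →ₗ[Λ] T₂ :=
    eqv.symm.toLinearMap.comp
      ((LinearMap.id - s.comp β).codRestrict (LinearMap.range α) hker) with hrr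
  have hrα : ∀ x, rr (α x) = x := by
    intro x
    have h6 : ((LinearMap.id - s.comp β).codRestrict (LinearMap.range α) hker) (α x) = eqv x := by
      apply Subtype.ext
      have : β (α x) = 0 := hβα x
      simp [this, heqv, LinearEquiv.ofInjective_apply]
    rw [hrr]
    simp only [LinearMap.comp_apply, LinearEquiv.coe_coe, h6]
    exact eqv.symm_apply_apply x
  set ρ : I →ₗ[Λ] T₂ := rr.comp (LinearMap.inl Λ _ _) with hρ
  set τ : Mq →ₗ[Λ] T₂ := rr.comp (LinearMap.inr Λ _ _) with hτ
  have hrel : ∀ x : T₂, ρ (f.rangeRestrict x) - τ (j x) = x := by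
    intro x
    have h7 : ((f.rangeRestrict x, (0 : Mq)) : I × Mq) - (0, j x) = α x := by
      rw [Prod.mk_sub_mk]
      simp [hα, Prod.ext_iff]
    calc ρ (f.rangeRestrict x) - τ (j x)
        = rr ((f.rangeRestrict x, (0 : Mq)) : I × Mq) - rr ((0, j x) : I × Mq) := rfl
      _ = rr (((f.rangeRestrict x, (0 : Mq)) : I × Mq) - (0, j x)) := (map_sub rr _ _).symm
      _ = rr (α x) := by rw [h7]
      _ = x := hrα x
  -- q = j - σ ∘ f lands in ker φ
  set q : T₂ →ₗ[Λ] Mq := j - σ.comp f with hq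
  have hφq : ∀ x, φ (q x) = 0 := by
    intro x
    simp [hq, hφj, hφσ]
  -- the decomposition id = A + B on T₂
  set A : T₂ →ₗ[Λ] T₂ := ρ.comp f.rangeRestrict - (τ.comp σ).comp f with hA
  have hdec : A + (-(τ.comp q)) = LinearMap.id := by
    ext x
    have h8 : j x = σ (f x) + q x := by
      have hqx : q x = j x - σ (f x) := rfl
      rw [hqx]; abel
    have h13 := hrel x
    rw [h8, map_add] at h13
    have h14 : (A + -(τ.comp q)) x = ρ (f.rangeRestrict x) - (τ.comp σ) (f x) - τ (q x) := by
      show A x + (-(τ.comp q)) x = _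
      have hAx : A x = ρ (f.rangeRestrict x) - (τ.comp σ) (f x) := rfl
      rw [hAx]
      show _ + -(τ (q x)) = _
      abel
    show (A + -(τ.comp q)) x = x
    rw [h14]
    calc ρ (f.rangeRestrict x) - (τ.comp σ) (f x) - τ (q x)
        = ρ (f.rangeRestrict x) - (τ (σ (f x)) + τ (q x)) := by
          have hcs : (τ.comp σ) (f x) = τ (σ (f x)) := rfl
          rw [hcs]; abel
      _ = x := h13
  obtain ⟨x₀, hx₀f, hx₀⟩ : ∃ x, f x = 0 ∧ x ≠ 0 := by
    by_contra hcc
    push_neg at hcc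
    apply hninj
    intro a b hab
    have hzero : f (a - b) = 0 := by rw [map_sub, hab, sub_self]
    exact sub_eq_zero.mp (hcc _ hzero)
  have hAx₀ : A x₀ = 0 := by
    have hfr : f.rangeRestrict x₀ = 0 := by
      apply Subtype.ext; simpa using hx₀f
    have h12 : A x₀ = ρ (f.rangeRestrict x₀) - (τ.comp σ) (f x₀) := rfl
    rw [h12, hfr, hx₀f, map_zero, map_zero, sub_zero]
  have hnotunitA : ¬ IsUnit A := by
    intro hu'
    exact hx₀ (((Module.End.isUnit_iff _).mp hu').1 (by rw [hAx₀]; simp))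
  have hunitB : IsUnit (-(τ.comp q)) := hr_unit_of_add K Λ T₂ h₂ _ _ hdec hnotunitA
  have hqinj : Function.Injective q := by
    have hBinj := ((Module.End.isUnit_iff _).mp hunitB).1
    intro a b hab
    apply hBinj
    simp [hab]
  -- dimension count
  haveI : FiniteDimensional K ((Fin n → Λ) × T₂) := inferInstance
  haveI : FiniteDimensional K Mq :=
    Module.Finite.of_surjective (D.mkQ.restrictScalars K) (D.mkQ_surjective)
  haveI : FiniteDimensional K I :=
    FiniteDimensional.of_injective (I.subtype.restrictScalars K) Subtype.coe_injective
  haveI : FiniteDimensional K (I × Mq) := inferInstance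
  set βK := β.restrictScalars K with hβK
  set αK := α.restrictScalars K with hαK
  set φK := φ.restrictScalars K with hφK
  have e1 : Module.finrank K (LinearMap.range βK) + Module.finrank K (LinearMap.ker βK)
      = Module.finrank K (I × Mq) := LinearMap.finrank_range_add_finrank_ker βK
  have hβKtop : LinearMap.range βK = ⊤ := LinearMap.range_eq_top.mpr hβsurj
  have e1' : Module.finrank K T₁ + Module.finrank K (LinearMap.ker βK)
      = Module.finrank K (I × Mq) := by
    rw [← e1, hβKtop, finrank_top]
  have hkerβ : LinearMap.range αK = LinearMap.ker βK := by
    ext z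
    constructor
    · rintro ⟨x, rfl⟩
      exact hβα x
    · intro hz
      have : z ∈ LinearMap.range α := by rw [hexact]; exact hz
      obtain ⟨x, rfl⟩ := this
      exact ⟨x, rfl⟩
  have e2 : Module.finrank K (LinearMap.ker βK) = Module.finrank K T₂ := by
    rw [← hkerβ]
    exact (LinearEquiv.finrank_eq (LinearEquiv.ofInjective αK hαinj)).symm
  have e3 : Module.finrank K (I × Mq) = Module.finrank K I + Module.finrank K Mq :=
    Module.finrank_prod
  have e4 : Module.finrank K (LinearMap.range φK) + Module.finrank K (LinearMap.ker φK)
      = Module.finrank K Mq := LinearMap.finrank_range_add_finrank_ker φK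
  have hφKtop : LinearMap.range φK = ⊤ := LinearMap.range_eq_top.mpr hφsurj
  have e4' : Module.finrank K T₁ + Module.finrank K (LinearMap.ker φK)
      = Module.finrank K Mq := by
    rw [← e4, hφKtop, finrank_top]
  have e5 : Module.finrank K T₂ ≤ Module.finrank K (LinearMap.ker φK) := by
    have hmem : ∀ x : T₂, q x ∈ LinearMap.ker φK := fun x => hφq x
    set qK : T₂ →ₗ[K] LinearMap.ker φK :=
      LinearMap.codRestrict (LinearMap.ker φK) (q.restrictScalars K) hmem with hqK
    have hqKinj : Function.Injective qK := by
      intro a b hab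
      apply hqinj
      exact congrArg Subtype.val hab
    exact LinearMap.finrank_le_finrank_of_injective hqKinj
  have e6 : 0 < Module.finrank K I := by
    rw [Module.finrank_pos_iff]
    obtain ⟨x, hx⟩ : ∃ x, f x ≠ 0 := by
      by_contra hcc
      push_neg at hcc
      exact hf (LinearMap.ext fun x => hcc x)
    exact ⟨⟨⟨f x, LinearMap.mem_range_self f x⟩, 0, fun hcontra => hx (by
      simpa using congrArg Subtype.val hcontra)⟩⟩
  omega
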